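/- arXiv:1410.1776 — 3 statements merged into one kernel-verified Lean document; each statement's English description precedes it below -/
import Mathlib

section
/- If a logic program P is stratified with respect to a stratification function σ : B_P → ℕ, then the perfect model Perf(P) = ⋃_{n∈ℕ} M_n, where M_0 is the least model of the stratum-0 rules and M_{n+1} is the least model of stratum-(n+1) rules containing M_n, is a model of P. -/
inductive Lit (α : Type*) : Type _
  | pos (a : α) : Lit α
  | neg (a : α) : Lit α

/-- The stratum of a literal: σ(A) for a positive atom, σ(A)+1 for a negated atom. -/
def litStratum {α : Type*} (σ : α → ℕ) : Lit α → ℕ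
  | .pos a => σ a
  | .neg a => σ a + 1

/-- Truth of a ground literal in a Herbrand interpretation. -/
def litTrue {α : Type*} (I : Set α) : Lit α → Prop
  | .pos a => a ∈ I
  | .neg a => a ∉ I

/-- A ground rule is true in `I` if its head is true in `I` or some body literal is false in `I`. -/
def ruleTrue {α : Type*} (I : Set α) (r : α × List (Lit α)) : Prop :=
  r.1 ∈ I ∨ ∃ l ∈ r.2, ¬ litTrue I l

/-- `I` is a model of `P` if every (ground) rule of `P` is true in `I`. -/
def IsModel {α : Type*} (P : Set (α × List (Lit α))) (I : Set α) : Prop :=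
  ∀ r ∈ P, ruleTrue I r

/-- `P` is stratified w.r.t. `σ` if for every rule the stratum of the head is
at least the stratum of each body literal. -/
def Stratified {α : Type*} (σ : α → ℕ) (P : Set (α × List (Lit α))) : Prop :=
  ∀ r ∈ P, ∀ l ∈ r.2, litStratum σ l ≤ σ r.1

/-- `S_n`: the rules of `P` whose head has stratum `n`. -/
def stratum {α : Type*} (σ : α → ℕ) (P : Set (α × List (Lit α))) (n : ℕ) :
    Set (α × List (Lit α)) :=
  {r ∈ P | σ r.1 = n}

/-- `M` is the least model of `S` containing `X`. -/
def LeastModelContaining {α : Type*} (S : Set (α × List (Lit α))) (X M : Set α) : Prop :=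
  IsModel S M ∧ X ⊆ M ∧ ∀ M', IsModel S M' → X ⊆ M' → M ⊆ M'

/-- If `P` is stratified w.r.t. `σ : B_P → ℕ`, then the perfect model
`Perf(P) = ⋃_n M_n` — where `M_0` is the least model of the stratum-0 rules and
`M_{n+1}` is the least model of the stratum-(n+1) rules containing `M_n` —
is a model of `P`. -/
theorem stmt1 {α : Type*} (σ : α → ℕ) (P : Set (α × List (Lit α)))
    (hstr : Stratified σ P) (M : ℕ → Set α)
    (h0 : LeastModelContaining (stratum σ P 0) ∅ (M 0))
    (hs : ∀ n, LeastModelContaining (stratum σ P (n + 1)) (M n) (M (n + 1))) :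
    IsModel P (⋃ n, M n) := by
  -- monotonicity
  have mono : ∀ {m n : ℕ}, m ≤ n → M m ⊆ M n := by
    intro m n h
    induction n with
    | zero => simp [Nat.le_zero.mp h]
    | succ n ih =>
      rcases Nat.lt_or_ge m (n+1) with h' | h'
      · exact subset_trans (ih (Nat.lt_succ_iff.mp h')) (hs n).2.1
      · have : m = n + 1 := le_antisymm h h'
        simp [this]
  -- stratum bound: M n ⊆ {a | σ a ≤ n}
  have bound : ∀ n, ∀ a ∈ M n, σ a ≤ n := by
    intro n
    induction n with
    | zero =>
      intro a ha
      have hmod : IsModel (stratum σ P 0) {a | σ a = 0} := by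
        intro r hr
        exact Or.inl hr.2
      have := h0.2.2 _ hmod (Set.empty_subset _) ha
      exact le_of_eq this
    | succ n ih =>
      intro a ha
      have hmod : IsModel (stratum σ P (n+1)) (M n ∪ {a | σ a = n + 1}) := by
        intro r hr
        exact Or.inl (Or.inr hr.2)
      have hsub : M n ⊆ M n ∪ {a | σ a = n + 1} := Set.subset_union_left
      rcases (hs n).2.2 _ hmod hsub ha with h' | h'
      · exact le_trans (ih a h') (Nat.le_succ n)
      · exact le_of_eq h'
  -- persistence: if a ∈ M m with σ a ≤ n ≤ m then a ∈ M n
  have persist : ∀ m n, n ≤ m → ∀ a ∈ M m, σ a ≤ n → a ∈ M n := by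
    intro m
    induction m with
    | zero => intro n hn a ha _; simpa [Nat.le_zero.mp hn] using ha
    | succ m ih =>
      intro n hn a ha hσ
      rcases Nat.lt_or_ge n (m+1) with h' | h'
      · have hn' : n ≤ m := Nat.lt_succ_iff.mp h'
        have hmod : IsModel (stratum σ P (m+1)) (M m ∪ {a | σ a = m + 1}) := by
          intro r hr
          exact Or.inl (Or.inr hr.2)
        rcases (hs m).2.2 _ hmod Set.subset_union_left ha with h'' | h''
        · exact ih n hn' a h'' hσ
        · simp only [Set.mem_setOf_eq] at h''; omega
      · have : n = m + 1 := le_antisymm hn h'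
        simpa [this] using ha
  -- main proof
  intro r hr
  set n := σ r.1 with hn
  have hrn : r ∈ stratum σ P n := ⟨hr, rfl⟩
  have hMn : IsModel (stratum σ P n) (M n) := by
    cases n with
    | zero => exact h0.1
    | succ k => exact (hs k).1
  rcases hMn r hrn with hh | ⟨l, hl, hfalse⟩
  · exact Or.inl (Set.mem_iUnion.mpr ⟨n, hh⟩)
  · refine Or.inr ⟨l, hl, ?_⟩
    cases l with
    | pos a =>
      intro hmem
      rcases Set.mem_iUnion.mp hmem with ⟨m, ham⟩
      have hσa : σ a ≤ n := hstr r hr _ hl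
      rcases Nat.le_total m n with h' | h'
      · exact hfalse (mono h' ham)
      · exact hfalse (persist m n h' a ham hσa)
    | neg a =>
      simp only [litTrue] at hfalse ⊢
      intro hnot
      exact hnot (Set.mem_iUnion.mpr ⟨n, not_not.mp hfalse⟩)
end

section
/- The rule-based definition of EG is correct for finite state spaces: in a finite transition system, EG(φ) holds in s0 (defined as the least relation closed under the three rules: (i) fpath(φ,s0,s0) implies EG(φ,s0); (ii) φ holds in s0 and r(s0,s1) and EG(φ,s1) implies EG(φ,s0); (iii) s0 is a sink and φ holds in s0 implies EG(φ,s0)) if and only if there exists a maximal path starting at s0 along which φ holds in every state. -/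
/-- `fpath(φ,x,y)`: least relation with: `φ` holds in `x` and `r x y` implies `fpath(φ,x,y)`;
and `φ` holds in `x`, `r x z` and `fpath(φ,z,y)` implies `fpath(φ,x,y)`. -/
inductive FPath {S : Type*} (r : S → S → Prop) (φ : S → Prop) : S → S → Prop
  | base {x y : S} : φ x → r x y → FPath r φ x y
  | step {x z y : S} : φ x → r x z → FPath r φ z y → FPath r φ x y

/-- A sink is a state with no `r`-successor. -/
def Sink {S : Type*} (r : S → S → Prop) (s : S) : Prop := ∀ s', ¬ r s s'

/-- The rule-based definition of EG: the least relation closed under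
(i) a nontrivial φ-cycle through `s` implies `EG(φ,s)`;
(ii) `φ` holds in `s`, `r s s'` and `EG(φ,s')` implies `EG(φ,s)`;
(iii) `s` is a sink and `φ` holds in `s` implies `EG(φ,s)`. -/
inductive EG {S : Type*} (r : S → S → Prop) (φ : S → Prop) : S → Prop
  | cyc {s : S} : FPath r φ s s → EG r φ s
  | step {s s' : S} : φ s → r s s' → EG r φ s' → EG r φ s
  | sink {s : S} : Sink r s → φ s → EG r φ s

/-- The maximal-path semantics of EG: there exists a maximal path starting at `s0`
(either an infinite `r`-path, or a finite `r`-path ending in a sink) along which `φ`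
holds in every state. -/
def EGPath {S : Type*} (r : S → S → Prop) (φ : S → Prop) (s0 : S) : Prop :=
  (∃ f : ℕ → S, f 0 = s0 ∧ (∀ i, r (f i) (f (i + 1))) ∧ ∀ i, φ (f i)) ∨
  (∃ (k : ℕ) (f : ℕ → S), f 0 = s0 ∧ (∀ i < k, r (f i) (f (i + 1))) ∧
      Sink r (f k) ∧ ∀ i ≤ k, φ (f i))

lemma fpath_chain {S : Type*} {r : S → S → Prop} {φ : S → Prop} {x y : S}
    (h : FPath r φ x y) :
    ∃ (n : ℕ) (g : ℕ → S), g 0 = x ∧ g (n + 1) = y ∧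
      (∀ i ≤ n, r (g i) (g (i + 1))) ∧ (∀ i ≤ n, φ (g i)) := by
  induction h with
  | @base x y hφ hr =>
    refine ⟨0, fun i => if i = 0 then x else y, rfl, rfl, ?_, ?_⟩
    · intro i hi; interval_cases i; simpa using hr
    · intro i hi; interval_cases i; simpa using hφ
  | @step x z y hφ hr _ ih =>
    obtain ⟨n, g, h0, h1, hr', hφ'⟩ := ih
    refine ⟨n + 1, fun i => if i = 0 then x else g (i - 1), rfl, by simp [h1], ?_, ?_⟩
    · intro i hi
      cases i with
      | zero => simpa [h0] using hr
      | succ i => simpa using hr' i (by omega)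
    · intro i hi
      cases i with
      | zero => simpa using hφ
      | succ i => simpa using hφ' i (by omega)

lemma egpath_of_cycle {S : Type*} {r : S → S → Prop} {φ : S → Prop} {x : S}
    (h : FPath r φ x x) : EGPath r φ x := by
  obtain ⟨n, g, h0, h1, hr, hφ⟩ := fpath_chain h
  left
  refine ⟨fun i => g (i % (n + 1)), by simpa using h0, ?_, ?_⟩
  · intro i
    show r (g (i % (n + 1))) (g ((i + 1) % (n + 1)))
    have hm : i % (n + 1) < n + 1 := Nat.mod_lt _ (by omega)
    have key : (i % (n + 1) + 1) % (n + 1) = (i + 1) % (n + 1) :=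
      Nat.ModEq.add_right 1 (Nat.mod_modEq i (n + 1))
    by_cases hc : i % (n + 1) = n
    · have h2 : (i + 1) % (n + 1) = 0 := by
        rw [← key, hc, Nat.mod_self]
      simp only [h2, hc, h0, ← h1]
      exact hr n le_rfl
    · have h2 : (i + 1) % (n + 1) = i % (n + 1) + 1 := by
        rw [← key, Nat.mod_eq_of_lt (by omega)]
      rw [h2]
      exact hr _ (by omega)
  · intro i
    exact hφ _ (by have := Nat.mod_lt i (show 0 < n + 1 by omega); omega)

lemma egpath_step {S : Type*} {r : S → S → Prop} {φ : S → Prop} {s s' : S}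
    (hφ : φ s) (hr : r s s') (h : EGPath r φ s') : EGPath r φ s := by
  rcases h with ⟨f, h0, hr', hφ'⟩ | ⟨k, f, h0, hr', hs, hφ'⟩
  · left
    refine ⟨fun i => if i = 0 then s else f (i - 1), rfl, ?_, ?_⟩
    · intro i
      cases i with
      | zero => simpa [h0] using hr
      | succ i => simpa using hr' i
    · intro i
      cases i with
      | zero => simpa using hφ
      | succ i => simpa using hφ' i
  · right
    refine ⟨k + 1, fun i => if i = 0 then s else f (i - 1), rfl, ?_, by simpa using hs, ?_⟩
    · intro i hi
      cases i with
      | zero => simpa [h0] using hr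
      | succ i => simpa using hr' i (by omega)
    · intro i hi
      cases i with
      | zero => simpa using hφ
      | succ i => simpa using hφ' i (by omega)

/-- Correctness of the rule-based definition of EG for finite state spaces:
in a finite transition system, `EG(φ)` holds in `s0` (least-relation definition) iff
there exists a maximal path starting at `s0` along which `φ` holds in every state. -/
theorem stmt8 {S : Type*} [Finite S] (r : S → S → Prop) (φ : S → Prop) (s0 : S) :
    EG r φ s0 ↔ EGPath r φ s0 := by
  constructor
  · intro h
    induction h with
    | cyc h => exact egpath_of_cycle h
    | step hφ hr _ ih => exact egpath_step hφ hr ih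
    | @sink s hs hφ =>
      exact Or.inr ⟨0, fun _ => s, rfl, by omega, hs, fun i _ => hφ⟩
  · rintro (⟨f, h0, hr, hφ⟩ | ⟨k, f, h0, hr, hs, hφ⟩)
    · have fp : ∀ d i, FPath r φ (f i) (f (i + d + 1)) := by
        intro d
        induction d with
        | zero => exact fun i => FPath.base (hφ i) (hr i)
        | succ d ih =>
          intro i
          have h2 : i + (d + 1) + 1 = (i + 1) + d + 1 := by omega
          rw [h2]
          exact FPath.step (hφ i) (hr i) (ih (i + 1))
      have key : ∀ i j : ℕ, i < j → f i = f j → EG r φ s0 := by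
        intro i j hij heq
        have hfp : FPath r φ (f i) (f i) := by
          have := fp (j - i - 1) i
          rw [show i + (j - i - 1) + 1 = j by omega] at this
          rwa [← heq] at this
        have egc : EG r φ (f i) := EG.cyc hfp
        have eg : ∀ d, EG r φ (f (i - d)) := by
          intro d
          induction d with
          | zero => exact egc
          | succ d ih =>
            rcases Nat.lt_or_ge d i with h | h
            · have h2 : i - (d + 1) + 1 = i - d := by omega
              exact EG.step (hφ _) (h2 ▸ hr (i - (d + 1))) ih
            · rwa [show i - (d + 1) = i - d by omega]
        have := eg i
        rw [Nat.sub_self, h0] at this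
        exact this
      obtain ⟨i, j, hne, heq⟩ := Finite.exists_ne_map_eq_of_infinite f
      rcases hne.lt_or_gt with h | h
      · exact key i j h heq
      · exact key j i h heq.symm
    · have eg : ∀ d, d ≤ k → EG r φ (f (k - d)) := by
        intro d
        induction d with
        | zero => exact fun _ => EG.sink hs (hφ k le_rfl)
        | succ d ih =>
          intro hd
          have h2 : k - (d + 1) + 1 = k - d := by omega
          exact EG.step (hφ _ (by omega)) (h2 ▸ hr (k - (d + 1)) (by omega)) (ih (by omega))
      have := eg k le_rfl
      rwa [Nat.sub_self, h0] at this
end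

section
/- In a finite transition system, if φ holds along an infinite path starting at s0, then there exists a state s on that path, reachable from s0 through states satisfying φ, such that fpath(φ,s,s) holds (i.e., there is a nontrivial φ-cycle through s); consequently EG(φ,s0) holds in the rule-based semantics. -/
/-- In a finite transition system, if `φ` holds along an infinite path starting at `s0`,
then there exists a state on that path (reachable from `s0` through states satisfying `φ`)
through which there is a nontrivial φ-cycle, i.e. `fpath(φ,s,s)` holds;
consequently `EG(φ,s0)` holds in the rule-based semantics. -/
theorem stmt9 {S : Type*} [Finite S] (r : S → S → Prop) (φ : S → Prop) (s0 : S)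
    (f : ℕ → S) (h0 : f 0 = s0) (hstep : ∀ i, r (f i) (f (i + 1)))
    (hφ : ∀ i, φ (f i)) :
    (∃ i, FPath r φ (f i) (f i)) ∧ EG r φ s0 := by
  have happ : ∀ {x y z : S}, FPath r φ x y → φ y → r y z → FPath r φ x z := by
    intro x y z h hy hr
    induction h with
    | base hx hxy => exact FPath.step hx hxy (FPath.base hy hr)
    | step hx hxz _ ih => exact FPath.step hx hxz (ih hy hr)
  have hpath : ∀ i j, i < j → FPath r φ (f i) (f j) := by
    intro i j hij
    induction j with
    | zero => omega
    | succ j ih =>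
      rcases Nat.lt_succ_iff_lt_or_eq.mp hij with h | h
      · exact happ (ih h) (hφ j) (hstep j)
      · subst h; exact FPath.base (hφ i) (hstep i)
  obtain ⟨i, j, hne, heq⟩ := Finite.exists_ne_map_eq_of_infinite f
  wlog hij : i < j generalizing i j
  · exact this j i hne.symm heq.symm (by omega)
  have hcyc : FPath r φ (f i) (f i) := heq ▸ hpath i j hij
  refine ⟨⟨i, hcyc⟩, ?_⟩
  have hEG : ∀ n k, k + n = i → EG r φ (f k) := by
    intro n
    induction n with
    | zero =>
      intro k hk
      obtain rfl : k = i := by omega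
      exact EG.cyc hcyc
    | succ n ih =>
      intro k hk
      exact EG.step (hφ k) (hstep k) (ih (k+1) (by omega))
  rw [← h0]; exact hEG i 0 (by omega)
end
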